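/- The boundary-value problem g − ℓ₁² g″ + ℓ₂⁴ g⁗ − ℓ₃⁶ g⁽⁶⁾ = f with boundary conditions g′(a) = g‴(a) = g⁽⁵⁾(a) = 0 and g(b) = g′(b) = g″(b) = 0 has at most one solution in C⁶([a,b]). -/

import Mathlib

open MeasureTheory intervalIntegral Set
set_option maxHeartbeats 1600000


/-- The boundary-value problem g − ℓ₁²g″ + ℓ₂⁴g⁗ − ℓ₃⁶g⁽⁶⁾ = f with boundary conditions
g′(a) = g‴(a) = g⁽⁵⁾(a) = 0 and g(b) = g′(b) = g″(b) = 0 has at most one C⁶ solution. -/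
theorem sixth_order_bvp_unique
    (a b ℓ₁ ℓ₂ ℓ₃ : ℝ) (hab : a < b) (h1 : 0 < ℓ₁) (h2 : 0 < ℓ₂) (h3 : 0 < ℓ₃)
    (f : ℝ → ℝ) (hf : ContinuousOn f (Set.Icc a b))
    (g₁ g₂ : ℝ → ℝ) (hg₁ : ContDiff ℝ 6 g₁) (hg₂ : ContDiff ℝ 6 g₂)
    (hode₁ : ∀ s ∈ Set.Icc a b,
      g₁ s - ℓ₁^2 * iteratedDeriv 2 g₁ s + ℓ₂^4 * iteratedDeriv 4 g₁ s
        - ℓ₃^6 * iteratedDeriv 6 g₁ s = f s)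
    (hode₂ : ∀ s ∈ Set.Icc a b,
      g₂ s - ℓ₁^2 * iteratedDeriv 2 g₂ s + ℓ₂^4 * iteratedDeriv 4 g₂ s
        - ℓ₃^6 * iteratedDeriv 6 g₂ s = f s)
    (hba1₁ : deriv g₁ a = 0) (hba3₁ : iteratedDeriv 3 g₁ a = 0)
    (hba5₁ : iteratedDeriv 5 g₁ a = 0)
    (hbb0₁ : g₁ b = 0) (hbb1₁ : deriv g₁ b = 0) (hbb2₁ : iteratedDeriv 2 g₁ b = 0)
    (hba1₂ : deriv g₂ a = 0) (hba3₂ : iteratedDeriv 3 g₂ a = 0)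
    (hba5₂ : iteratedDeriv 5 g₂ a = 0)
    (hbb0₂ : g₂ b = 0) (hbb1₂ : deriv g₂ b = 0) (hbb2₂ : iteratedDeriv 2 g₂ b = 0) :
    ∀ s ∈ Set.Icc a b, g₁ s = g₂ s := by
  set h : ℝ → ℝ := g₁ - g₂ with hh_def
  have hh : ContDiff ℝ 6 h := hg₁.sub hg₂
  -- iterated derivative of difference
  have hsub : ∀ n : ℕ, n ≤ 6 → ∀ s : ℝ,
      iteratedDeriv n h s = iteratedDeriv n g₁ s - iteratedDeriv n g₂ s := by
    intro n hn s
    rw [← iteratedDerivWithin_univ, ← iteratedDerivWithin_univ, ← iteratedDerivWithin_univ]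
    exact iteratedDerivWithin_sub (Set.mem_univ s) uniqueDiffOn_univ
      (hg₁.contDiffWithinAt.of_le (by exact_mod_cast hn))
      (hg₂.contDiffWithinAt.of_le (by exact_mod_cast hn))
  -- the homogeneous ODE for h
  have hode : ∀ s ∈ Set.Icc a b,
      h s - ℓ₁^2 * iteratedDeriv 2 h s + ℓ₂^4 * iteratedDeriv 4 h s
        - ℓ₃^6 * iteratedDeriv 6 h s = 0 := by
    intro s hs
    have e1 := hode₁ s hs
    have e2 := hode₂ s hs
    have h0 : h s = g₁ s - g₂ s := rfl
    rw [h0, hsub 2 (by norm_num) s, hsub 4 (by norm_num) s, hsub 6 (by norm_num) s]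
    ring_nf
    ring_nf at e1 e2
    linarith
  -- differentiability facts
  have hd : ∀ i : ℕ, i < 6 → ∀ s : ℝ,
      HasDerivAt (iteratedDeriv i h) (iteratedDeriv (i+1) h s) s := by
    intro i hi s
    have := hh.differentiable_iteratedDeriv i (by exact_mod_cast hi)
    rw [iteratedDeriv_succ]
    exact (this s).hasDerivAt
  have hd0 : ∀ s : ℝ, HasDerivAt h (iteratedDeriv 1 h s) s := by
    intro s
    have := hd 0 (by norm_num) s
    rwa [iteratedDeriv_zero] at this
  -- energy and boundary functions
  set E : ℝ → ℝ := fun s => h s ^ 2 + ℓ₁^2 * (iteratedDeriv 1 h s)^2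
      + ℓ₂^4 * (iteratedDeriv 2 h s)^2 + ℓ₃^6 * (iteratedDeriv 3 h s)^2 with hE_def
  set B : ℝ → ℝ := fun s =>
      -ℓ₁^2 * (h s * iteratedDeriv 1 h s)
      + ℓ₂^4 * (h s * iteratedDeriv 3 h s - iteratedDeriv 1 h s * iteratedDeriv 2 h s)
      - ℓ₃^6 * (h s * iteratedDeriv 5 h s - iteratedDeriv 1 h s * iteratedDeriv 4 h s
          + iteratedDeriv 2 h s * iteratedDeriv 3 h s) with hB_def
  have hBderiv : ∀ s ∈ Set.uIcc a b, HasDerivAt B (-(E s)) s := by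
    intro s hs
    have hs' : s ∈ Set.Icc a b := by rwa [Set.uIcc_of_le hab.le] at hs
    have H : HasDerivAt B
        (-ℓ₁^2 * (iteratedDeriv 1 h s * iteratedDeriv 1 h s + h s * iteratedDeriv 2 h s)
        + ℓ₂^4 * ((iteratedDeriv 1 h s * iteratedDeriv 3 h s + h s * iteratedDeriv 4 h s)
            - (iteratedDeriv 2 h s * iteratedDeriv 2 h s
               + iteratedDeriv 1 h s * iteratedDeriv 3 h s))
        - ℓ₃^6 * ((iteratedDeriv 1 h s * iteratedDeriv 5 h s + h s * iteratedDeriv 6 h s)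
            - (iteratedDeriv 2 h s * iteratedDeriv 4 h s
               + iteratedDeriv 1 h s * iteratedDeriv 5 h s)
            + (iteratedDeriv 3 h s * iteratedDeriv 3 h s
               + iteratedDeriv 2 h s * iteratedDeriv 4 h s))) s := by
      exact ((((hd0 s).mul (hd 1 (by norm_num) s)).const_mul (-ℓ₁^2)).add
        ((((hd0 s).mul (hd 3 (by norm_num) s)).sub
          ((hd 1 (by norm_num) s).mul (hd 2 (by norm_num) s))).const_mul (ℓ₂^4))).sub
        (((((hd0 s).mul (hd 5 (by norm_num) s)).sub
          ((hd 1 (by norm_num) s).mul (hd 4 (by norm_num) s))).add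
          ((hd 2 (by norm_num) s).mul (hd 3 (by norm_num) s))).const_mul (ℓ₃^6))
    convert H using 1
    have := hode s hs'
    simp only [hE_def]
    linear_combination (-(h s)) * this
  -- continuity of E
  have hEcont : Continuous E := by
    apply Continuous.add
    apply Continuous.add
    apply Continuous.add
    · exact (hh.continuous).pow 2
    · exact continuous_const.mul ((hh.continuous_iteratedDeriv 1 (by norm_num)).pow 2)
    · exact continuous_const.mul ((hh.continuous_iteratedDeriv 2 (by norm_num)).pow 2)
    · exact continuous_const.mul ((hh.continuous_iteratedDeriv 3 (by norm_num)).pow 2)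
  -- boundary values of h
  have ha1 : iteratedDeriv 1 h a = 0 := by
    rw [hsub 1 (by norm_num) a, iteratedDeriv_one, iteratedDeriv_one, hba1₁, hba1₂]; ring
  have ha3 : iteratedDeriv 3 h a = 0 := by
    rw [hsub 3 (by norm_num) a, hba3₁, hba3₂]; ring
  have ha5 : iteratedDeriv 5 h a = 0 := by
    rw [hsub 5 (by norm_num) a, hba5₁, hba5₂]; ring
  have hb0 : h b = 0 := by simp [hh_def, hbb0₁, hbb0₂]
  have hb1 : iteratedDeriv 1 h b = 0 := by
    rw [hsub 1 (by norm_num) b, iteratedDeriv_one, iteratedDeriv_one, hbb1₁, hbb1₂]; ring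
  have hb2 : iteratedDeriv 2 h b = 0 := by
    rw [hsub 2 (by norm_num) b, hbb2₁, hbb2₂]; ring
  have ha1' : deriv h a = 0 := by rw [← iteratedDeriv_one]; exact ha1
  have hb1' : deriv h b = 0 := by rw [← iteratedDeriv_one]; exact hb1
  have hBa : B a = 0 := by simp [hB_def, iteratedDeriv_one, ha1', ha3, ha5]
  have hBb : B b = 0 := by simp [hB_def, iteratedDeriv_one, hb0, hb1', hb2]
  -- FTC
  have hint : ∫ s in a..b, -(E s) = 0 := by
    rw [intervalIntegral.integral_eq_sub_of_hasDerivAt hBderiv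
      (hEcont.neg.intervalIntegrable a b), hBa, hBb, sub_zero]
  have hintE : ∫ s in a..b, E s = 0 := by
    have : ∫ s in a..b, -(E s) = -∫ s in a..b, E s := intervalIntegral.integral_neg
    rw [this] at hint
    linarith
  -- E nonneg
  have hEnonneg : ∀ s, 0 ≤ E s := by
    intro s
    have := sq_nonneg (h s)
    have := sq_nonneg (iteratedDeriv 1 h s)
    have := sq_nonneg (iteratedDeriv 2 h s)
    have := sq_nonneg (iteratedDeriv 3 h s)
    positivity
  -- conclude E = 0 a.e., hence everywhere on Icc
  have hae : E =ᵐ[volume.restrict (Set.Ioc a b)] 0 := by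
    rw [← intervalIntegral.integral_eq_zero_iff_of_le_of_nonneg_ae hab.le
      (Filter.Eventually.of_forall hEnonneg) (hEcont.intervalIntegrable a b)]
    exact hintE
  have hae' : E =ᵐ[volume.restrict (Set.Icc a b)] 0 := by
    rwa [← Measure.restrict_congr_set Ioc_ae_eq_Icc]
  have hEzero : Set.EqOn E 0 (Set.Icc a b) :=
    Measure.eqOn_Icc_of_ae_eq volume hab.ne hae' hEcont.continuousOn continuousOn_const
  intro s hs
  have hE0 : E s = 0 := hEzero hs
  have : h s = 0 := by
    simp only [hE_def] at hE0
    have t1 : 0 ≤ ℓ₁^2 * (iteratedDeriv 1 h s)^2 := by positivity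
    have t2 : 0 ≤ ℓ₂^4 * (iteratedDeriv 2 h s)^2 := by positivity
    have t3 : 0 ≤ ℓ₃^6 * (iteratedDeriv 3 h s)^2 := by positivity
    have hsq : h s ^ 2 = 0 := by linarith [sq_nonneg (h s)]
    exact pow_eq_zero_iff (by norm_num) |>.mp hsq
  have : g₁ s - g₂ s = 0 := this
  linarith
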